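/- Let (U, V, E) be a bipartite graph and Δ > 0 such that every vertex in U has degree exactly Δ and every vertex in V has degree at least Δ. Then there exists a matching M ⊆ E of size |M| ≥ (1 − 1/e)·|V|. -/
import Mathlib

/-- Let `(U, V, E)` be a bipartite graph in which every vertex of `U` has degree exactly
`Δ > 0` and every vertex of `V` has degree at least `Δ`. Then there is a matching
`M ⊆ E` of size `|M| ≥ (1 − 1/e)·|V|`. -/
theorem stmt_6 {α β : Type*} [DecidableEq α] [DecidableEq β]
    (U : Finset α) (V : Finset β) (E : Finset (α × β)) (Δ : ℕ) (hΔ : 0 < Δ)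
    (hE : E ⊆ U ×ˢ V)
    (hU : ∀ a ∈ U, (E.filter (fun e => e.1 = a)).card = Δ)
    (hV : ∀ b ∈ V, Δ ≤ (E.filter (fun e => e.2 = b)).card) :
    ∃ M ⊆ E, (∀ e ∈ M, ∀ e' ∈ M, e ≠ e' → e.1 ≠ e'.1 ∧ e.2 ≠ e'.2) ∧
      (1 - 1 / Real.exp 1) * V.card ≤ (M.card : ℝ) := by
  classical
  -- neighborhoods of vertices of V
  set t : {b // b ∈ V} → Finset α :=
    fun b => (E.filter (fun e => e.2 = b.1)).image Prod.fst with ht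
  -- Hall's condition
  have hall : ∀ s : Finset {b // b ∈ V}, s.card ≤ (s.biUnion t).card := by
    intro s
    have hdisj : ∀ x ∈ s, ∀ y ∈ s, x ≠ y →
        Disjoint (E.filter (fun e => e.2 = x.1)) (E.filter (fun e => e.2 = y.1)) := by
      intro x _ y _ hxy
      simp only [Finset.disjoint_left, Finset.mem_filter]
      rintro e ⟨_, he1⟩ ⟨_, he2⟩
      exact hxy (Subtype.ext (he1 ▸ he2))
    have hlow : s.card * Δ ≤ (s.biUnion (fun b => E.filter (fun e => e.2 = b.1))).card := by
      rw [Finset.card_biUnion hdisj]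
      calc s.card * Δ = ∑ _b ∈ s, Δ := by rw [Finset.sum_const, smul_eq_mul]
        _ ≤ ∑ b ∈ s, (E.filter (fun e => e.2 = b.1)).card :=
          Finset.sum_le_sum fun b _ => hV b.1 b.2
    have hsub : s.biUnion (fun b => E.filter (fun e => e.2 = b.1)) ⊆
        (s.biUnion t).biUnion (fun a => E.filter (fun e => e.1 = a)) := by
      intro e he
      simp only [Finset.mem_biUnion, Finset.mem_filter] at he ⊢
      obtain ⟨b, hb, heE, heb⟩ := he
      exact ⟨e.1, ⟨b, hb, Finset.mem_image.2 ⟨e, Finset.mem_filter.2 ⟨heE, heb⟩, rfl⟩⟩,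
        ⟨heE, rfl⟩⟩
    have hmemU : ∀ a ∈ s.biUnion t, a ∈ U := by
      intro a ha
      simp only [Finset.mem_biUnion, ht, Finset.mem_image, Finset.mem_filter] at ha
      obtain ⟨b, _, e, ⟨heE, _⟩, rfl⟩ := ha
      exact (Finset.mem_product.1 (hE heE)).1
    have hup : ((s.biUnion t).biUnion (fun a => E.filter (fun e => e.1 = a))).card ≤
        (s.biUnion t).card * Δ := by
      calc ((s.biUnion t).biUnion (fun a => E.filter (fun e => e.1 = a))).card
          ≤ ∑ a ∈ s.biUnion t, (E.filter (fun e => e.1 = a)).card :=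
            Finset.card_biUnion_le
        _ = ∑ a ∈ s.biUnion t, Δ := Finset.sum_congr rfl fun a ha => hU a (hmemU a ha)
        _ = (s.biUnion t).card * Δ := by rw [Finset.sum_const, smul_eq_mul]
    have : s.card * Δ ≤ (s.biUnion t).card * Δ :=
      le_trans hlow (le_trans (Finset.card_le_card hsub) hup)
    exact Nat.le_of_mul_le_mul_right (by simpa [mul_comm] using this) hΔ
  obtain ⟨f, hfinj, hf⟩ := (Finset.all_card_le_biUnion_card_iff_exists_injective t).1 hall
  -- build matching
  refine ⟨V.attach.image (fun b => (f b, b.1)), ?_, ?_, ?_⟩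
  · intro e he
    simp only [Finset.mem_image, Finset.mem_attach, true_and] at he
    obtain ⟨b, rfl⟩ := he
    have := hf b
    simp only [ht, Finset.mem_image, Finset.mem_filter] at this
    obtain ⟨e, ⟨heE, he2⟩, he1⟩ := this
    have : e = (f b, b.1) := Prod.ext he1 he2
    exact this ▸ heE
  · intro e he e' he' hne
    simp only [Finset.mem_image, Finset.mem_attach, true_and] at he he'
    obtain ⟨b, rfl⟩ := he
    obtain ⟨b', rfl⟩ := he'
    have hbb : b ≠ b' := fun h => hne (by rw [h])
    exact ⟨fun h => hbb (hfinj h), fun h => hbb (Subtype.ext h)⟩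
  · have hcard : (V.attach.image (fun b => (f b, b.1))).card = V.card := by
      rw [Finset.card_image_of_injective _ (fun x y hxy => Subtype.ext (congrArg Prod.snd hxy)),
        Finset.card_attach]
    rw [hcard]
    have h1 : (1 - 1 / Real.exp 1) ≤ 1 := by
      have : 0 ≤ 1 / Real.exp 1 := by positivity
      linarith
    nlinarith [Nat.cast_nonneg (α := ℝ) V.card]
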